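/- Let M ≥ 0 and K̂ > 0, let 0 < θ < c₁ ≤ 1, and let (x_n)_{n≥1} be a sequence of nonnegative reals with x₁ ≤ K̂ and K̂ ≥ K/c₁ for some K with the following property: for every n ≥ 1, x_{n+1} ≤ x_n + γ_{n+1}(u_{n+1} + K + (θ - c₁) x_n), where 0 < γ_{n+1} ≤ 1/c₁ and the partial sums satisfy |Σ_{k=n}^m γ_{k+1} u_{k+1}| ≤ M for all 1 ≤ n ≤ m. Then x_n ≤ 2M + (1 + c₁ - θ)/(c₁ - θ) · K̂ for all n ≥ 1. -/
import Mathlib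


/-- Deterministic core of the compactness lemma: a recursive inequality with negative
drift, bounded perturbation sums, and bounded step sizes implies a uniform bound. -/
theorem stmt_7 (M Khat K θ c₁ : ℝ) (x γ u : ℕ → ℝ)
    (hM : 0 ≤ M) (hKhat : 0 < Khat) (hθ : 0 < θ) (hθc : θ < c₁) (hc : c₁ ≤ 1)
    (hx1 : x 1 ≤ Khat) (hKK : K / c₁ ≤ Khat)
    (hxpos : ∀ n, 0 ≤ x n)
    (hrec : ∀ n : ℕ, 1 ≤ n →
      x (n + 1) ≤ x n + γ (n + 1) * (u (n + 1) + K + (θ - c₁) * x n))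
    (hγ : ∀ n : ℕ, 1 ≤ n → 0 < γ (n + 1) ∧ γ (n + 1) ≤ 1 / c₁)
    (hsum : ∀ n m : ℕ, 1 ≤ n → n ≤ m →
      |∑ k ∈ Finset.Icc n m, γ (k + 1) * u (k + 1)| ≤ M) :
    ∀ n : ℕ, 1 ≤ n → x n ≤ 2 * M + (1 + c₁ - θ) / (c₁ - θ) * Khat := by
  have hc₁ : 0 < c₁ := lt_trans hθ hθc
  have hcθ : 0 < c₁ - θ := by linarith
  set T : ℝ := c₁ * Khat / (c₁ - θ) with hT
  have hTc : T * (c₁ - θ) = c₁ * Khat := div_mul_cancel₀ _ (ne_of_gt hcθ)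
  have hKT : Khat < T := by
    rw [hT, lt_div_iff₀ hcθ]; nlinarith
  have hKc : K ≤ c₁ * Khat := by
    have := (div_le_iff₀ hc₁).mp hKK; linarith
  have hγK : ∀ n : ℕ, 1 ≤ n → γ (n + 1) * K ≤ Khat := by
    intro n hn
    obtain ⟨hg0, hg1⟩ := hγ n hn
    rcases le_or_gt 0 K with hK0 | hK0
    · calc γ (n + 1) * K ≤ (1 / c₁) * K := by nlinarith
        _ ≤ Khat := by rw [one_div, inv_mul_eq_div]; exact hKK
    · nlinarith
  have key : ∀ n : ℕ, 1 ≤ n → (x n < T ∨ ∃ m, 1 ≤ m ∧ m + 1 ≤ n ∧ T ≤ x n ∧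
      x n ≤ T + Khat + ∑ k ∈ Finset.Icc m (n - 1), γ (k + 1) * u (k + 1)) := by
    intro n hn
    induction n, hn using Nat.le_induction with
    | base => exact Or.inl (lt_of_le_of_lt hx1 hKT)
    | succ n hn ih =>
      rcases lt_or_ge (x (n + 1)) T with h | h
      · exact Or.inl h
      right
      obtain ⟨hg0, hg1⟩ := hγ n hn
      rcases ih with hlt | ⟨m, hm1, hmn, hTx, hxb⟩
      · refine ⟨n, hn, le_refl _, h, ?_⟩
        have hsimp : (n + 1 - 1 : ℕ) = n := rfl
        rw [hsimp, Finset.Icc_self, Finset.sum_singleton]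
        have hdrift : 0 ≤ γ (n + 1) * ((c₁ - θ) * x n) :=
          mul_nonneg (le_of_lt hg0) (mul_nonneg (le_of_lt hcθ) (hxpos n))
        have hr := hrec n hn
        have hK' := hγK n hn
        nlinarith
      · obtain ⟨j, rfl⟩ : ∃ j, n = j + 1 := ⟨n - 1, (Nat.succ_pred_eq_of_pos hn).symm⟩
        refine ⟨m, hm1, by omega, h, ?_⟩
        have hmj : m ≤ j + 1 := by omega
        have hsimp : (j + 1 + 1 - 1 : ℕ) = j + 1 := rfl
        have hsimp2 : (j + 1 - 1 : ℕ) = j := rfl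
        rw [hsimp, Finset.sum_Icc_succ_top hmj]
        rw [hsimp2] at hxb
        have hr := hrec (j + 1) hn
        have hKx : K ≤ (c₁ - θ) * x (j + 1) := by nlinarith
        have hdrift : γ (j + 1 + 1) * (K - (c₁ - θ) * x (j + 1)) ≤ 0 :=
          mul_nonpos_of_nonneg_of_nonpos (le_of_lt hg0) (by linarith)
        nlinarith
  intro n hn
  rcases key n hn with h | ⟨m, hm1, hmn, hTx, hxb⟩
  · have hbd : T ≤ (1 + c₁ - θ) / (c₁ - θ) * Khat := by
      rw [hT, div_mul_eq_mul_div, div_le_div_iff₀ hcθ hcθ]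
      nlinarith [mul_nonneg (mul_nonneg (by linarith : (0:ℝ) ≤ 1 - θ) hKhat.le) hcθ.le]
    linarith
  · have hS : ∑ k ∈ Finset.Icc m (n - 1), γ (k + 1) * u (k + 1) ≤ M := by
      have := hsum m (n - 1) hm1 (by omega)
      exact (abs_le.mp this).2
    have hbd : T + Khat ≤ M + (1 + c₁ - θ) / (c₁ - θ) * Khat := by
      have hR : (1 + c₁ - θ) / (c₁ - θ) * Khat = ((1 + c₁ - θ) * Khat) / (c₁ - θ) := by ring
      rw [hR]
      have : T + Khat ≤ ((1 + c₁ - θ) * Khat) / (c₁ - θ) := by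
        rw [le_div_iff₀ hcθ]; nlinarith
      linarith
    linarith
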